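/- Let g, h : R^n → R be C¹ with ∇g L-Lipschitz and ∇h M-Lipschitz, let f = g + h, and let 0 < γ ≤ min(1/L, 1/M). Define φ(x) = (1/(2γ))‖x - (x^{k-1} - γ∇h(x^{k-1}))‖² + g(x), let x̄^k be a global minimizer of φ, and suppose ‖x^k - x̄^k‖₂ ≤ α ε_{k-1}. Set λ = 1/γ + L. Then f(x^k) ≤ f(x^{k-1}) - ((1 - γM)/(2γ)) ‖x^k - x^{k-1}‖₂² + (λ α² ε_{k-1}²)/2. -/

import Mathlib

open InnerProductSpace

lemma dir_deriv {E : Type*} [NormedAddCommGroup E] [InnerProductSpace ℝ E] [CompleteSpace E]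
    (F : E → ℝ) (hF : Differentiable ℝ F) (x d : E) (t : ℝ) :
    HasDerivAt (fun s : ℝ => F (x + s • d)) (inner ℝ (gradient F (x + t • d)) d) t := by
  have hc : HasDerivAt (fun s : ℝ => x + s • d) d t := by
    simpa using ((hasDerivAt_id t).smul_const d).const_add x
  have hg : HasFDerivAt F ((toDual ℝ E) (gradient F (x + t • d))) (x + t • d) :=
    hasGradientAt_iff_hasFDerivAt.mp (hF _).hasGradientAt
  rw [← toDual_apply_apply]
  exact hg.comp_hasDerivAt t hc

lemma descent_lemma {E : Type*} [NormedAddCommGroup E] [InnerProductSpace ℝ E] [CompleteSpace E]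
    (F : E → ℝ) (C : ℝ) (hC : 0 ≤ C) (hF : Differentiable ℝ F)
    (hlip : ∀ x y, ‖gradient F x - gradient F y‖ ≤ C * ‖x - y‖) (x y : E) :
    F y ≤ F x + inner ℝ (gradient F x) (y - x) + C / 2 * ‖y - x‖ ^ 2 := by
  set d := y - x with hd
  have hcontg : Continuous (fun z => gradient F z) := by
    refine (LipschitzWith.of_dist_le_mul (K := C.toNNReal) fun a b => ?_).continuous
    simpa [dist_eq_norm, Real.coe_toNNReal C hC] using hlip a b
  have hcψ : Continuous (fun t : ℝ => (inner ℝ (gradient F (x + t • d)) d : ℝ)) := by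
    exact (hcontg.comp (continuous_const.add (continuous_id.smul continuous_const))).inner continuous_const
  have key : ∫ t in (0:ℝ)..1, (inner ℝ (gradient F (x + t • d)) d : ℝ) = F y - F x := by
    have := intervalIntegral.integral_eq_sub_of_hasDerivAt
      (f := fun s : ℝ => F (x + s • d)) (fun t _ => dir_deriv F hF x d t)
      (hcψ.intervalIntegrable 0 1)
    simpa [hd] using this
  have hb : ∫ t in (0:ℝ)..1, (inner ℝ (gradient F (x + t • d)) d : ℝ)
      ≤ ∫ t in (0:ℝ)..1, ((inner ℝ (gradient F x) d : ℝ) + C * ‖d‖ ^ 2 * t) := by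
    refine intervalIntegral.integral_mono_on zero_le_one (hcψ.intervalIntegrable 0 1)
      ((continuous_const.add (continuous_const.mul continuous_id) : Continuous fun t : ℝ => (inner ℝ (gradient F x) d : ℝ) + C * ‖d‖ ^ 2 * t).intervalIntegrable 0 1) ?_
    intro t ht
    rcases ht with ⟨ht0, ht1⟩
    have h1 : (inner ℝ (gradient F (x + t • d)) d : ℝ) - inner ℝ (gradient F x) d
        = inner ℝ (gradient F (x + t • d) - gradient F x) d := by
      rw [inner_sub_left]
    have h2 : (inner ℝ (gradient F (x + t • d) - gradient F x) d : ℝ)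
        ≤ ‖gradient F (x + t • d) - gradient F x‖ * ‖d‖ := real_inner_le_norm _ _
    have h3 : ‖gradient F (x + t • d) - gradient F x‖ ≤ C * (t * ‖d‖) := by
      have := hlip (x + t • d) x
      simpa [norm_smul, abs_of_nonneg ht0] using this
    nlinarith [norm_nonneg d]
  have hrhs : ∫ t in (0:ℝ)..1, ((inner ℝ (gradient F x) d : ℝ) + C * ‖d‖ ^ 2 * t)
      = (inner ℝ (gradient F x) d : ℝ) + C * ‖d‖ ^ 2 * (1 / 2) := by
    have hint : IntervalIntegrable (fun t : ℝ => C * ‖d‖ ^ 2 * t) MeasureTheory.volume 0 1 :=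
      Continuous.intervalIntegrable (by fun_prop) 0 1
    rw [intervalIntegral.integral_add intervalIntegrable_const hint]
    have : ∫ t in (0:ℝ)..1, C * ‖d‖ ^ 2 * t = (C * ‖d‖ ^ 2) * ∫ t in (0:ℝ)..1, t :=
      intervalIntegral.integral_const_mul _ _
    rw [this, integral_id]
    norm_num
  rw [hrhs] at hb
  rw [key] at hb
  linarith

set_option maxHeartbeats 1000000 in
/-- Sufficient-decrease inequality for PR-SANS with an inexact prior: the objective
`f = g + h` decreases up to an error term controlled by `ε_{k-1}`. -/
theorem stmt_5 {n : ℕ} (g h : EuclideanSpace ℝ (Fin n) → ℝ)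
    (L M γ α ε : ℝ) (hL : 0 < L) (hM : 0 < M) (hγ : 0 < γ)
    (hγle : γ ≤ min (1 / L) (1 / M)) (hα : 0 < α) (hε : 0 ≤ ε)
    (hgdiff : Differentiable ℝ g) (hhdiff : Differentiable ℝ h)
    (hglip : ∀ x y, ‖gradient g x - gradient g y‖ ≤ L * ‖x - y‖)
    (hhlip : ∀ x y, ‖gradient h x - gradient h y‖ ≤ M * ‖x - y‖)
    (f : EuclideanSpace ℝ (Fin n) → ℝ) (hf : ∀ x, f x = g x + h x)
    (xprev xk xbar : EuclideanSpace ℝ (Fin n))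
    (φ : EuclideanSpace ℝ (Fin n) → ℝ)
    (hφ : ∀ x, φ x = (1 / (2 * γ)) * ‖x - (xprev - γ • gradient h xprev)‖ ^ 2 + g x)
    (hmin : ∀ u, φ xbar ≤ φ u)
    (hclose : ‖xk - xbar‖ ≤ α * ε) :
    f xk ≤ f xprev - ((1 - γ * M) / (2 * γ)) * ‖xk - xprev‖ ^ 2
      + ((1 / γ + L) * α ^ 2 * ε ^ 2) / 2 := by
  have hγ' : (2:ℝ) * γ ≠ 0 := by positivity
  set v : EuclideanSpace ℝ (Fin n) := xprev - γ • gradient h xprev with hv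
  set d : EuclideanSpace ℝ (Fin n) := xk - xbar with hd
  set w : EuclideanSpace ℝ (Fin n) := xbar - v with hw
  -- first-order optimality at xbar along direction d
  have hloc : IsLocalMin (fun t : ℝ => φ (xbar + t • d)) 0 :=
    Filter.Eventually.of_forall fun t => by simpa using hmin (xbar + t • d)
  have hφfun : (fun t : ℝ => φ (xbar + t • d))
      = fun t : ℝ => (1 / (2 * γ)) * (‖w‖ ^ 2 + 2 * t * inner ℝ w d + t ^ 2 * ‖d‖ ^ 2)
        + g (xbar + t • d) := by
    funext t
    rw [hφ]
    have h1 : xbar + t • d - v = w + t • d := by rw [hw]; abel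
    rw [h1, norm_add_sq_real, real_inner_smul_right, norm_smul]
    simp only [mul_pow, sq_abs, Real.norm_eq_abs]
    ring_nf
  have hderiv : HasDerivAt (fun t : ℝ => φ (xbar + t • d))
      ((1 / (2 * γ)) * (2 * inner ℝ w d) + inner ℝ (gradient g xbar) d) 0 := by
    rw [hφfun]
    have ha : HasDerivAt (fun t : ℝ => 2 * t * inner ℝ w d) (2 * inner ℝ w d) 0 := by
      simpa using ((hasDerivAt_id (0:ℝ)).const_mul (2:ℝ)).mul_const (inner ℝ w d : ℝ)
    have hb2 : HasDerivAt (fun t : ℝ => t ^ 2 * ‖d‖ ^ 2) 0 0 := by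
      simpa using (hasDerivAt_pow 2 (0:ℝ)).mul_const (‖d‖ ^ 2)
    have h1 : HasDerivAt (fun t : ℝ => ‖w‖ ^ 2 + 2 * t * inner ℝ w d + t ^ 2 * ‖d‖ ^ 2)
        (2 * inner ℝ w d) 0 := by
      have h' := ((hasDerivAt_const (0:ℝ) (‖w‖ ^ 2)).add ha).add hb2
      simp only [zero_add, add_zero] at h'
      exact h'
    have hquad := h1.const_mul (1 / (2 * γ))
    have hlin : HasDerivAt (fun t : ℝ => g (xbar + t • d)) (inner ℝ (gradient g xbar) d : ℝ) 0 := by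
      simpa using dir_deriv g hgdiff xbar d 0
    exact hquad.add hlin
  have hfoc : (1 / (2 * γ)) * (2 * inner ℝ w d) + (inner ℝ (gradient g xbar) d : ℝ) = 0 := by
    have h0 := hloc.deriv_eq_zero
    rwa [hderiv.deriv] at h0
  -- descent lemmas
  have hdg : g xk ≤ g xbar + inner ℝ (gradient g xbar) d + L / 2 * ‖d‖ ^ 2 := by
    simpa [← hd] using descent_lemma g L hL.le hgdiff hglip xbar xk
  have hdh : h xk ≤ h xprev + inner ℝ (gradient h xprev) (xk - xprev) + M / 2 * ‖xk - xprev‖ ^ 2 :=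
    descent_lemma h M hM.le hhdiff hhlip xprev xk
  -- norm expansions
  have e1 : ‖xk - v‖ ^ 2 = ‖w‖ ^ 2 + 2 * inner ℝ w d + ‖d‖ ^ 2 := by
    have h1 : xk - v = w + d := by rw [hw, hd]; abel
    rw [h1, norm_add_sq_real]
  have e2 : ‖xprev - v‖ ^ 2 = γ ^ 2 * ‖gradient h xprev‖ ^ 2 := by
    have h1 : xprev - v = γ • gradient h xprev := by rw [hv]; abel
    rw [h1, norm_smul]
    simp [mul_pow, sq_abs]
  have e3 : ‖xk - v‖ ^ 2 = ‖xk - xprev‖ ^ 2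
      + 2 * γ * inner ℝ (gradient h xprev) (xk - xprev)
      + γ ^ 2 * ‖gradient h xprev‖ ^ 2 := by
    have h1 : xk - v = (xk - xprev) + γ • gradient h xprev := by rw [hv]; abel
    rw [h1, norm_add_sq_real, real_inner_smul_right, norm_smul,
      real_inner_comm (xk - xprev) (gradient h xprev)]
    simp only [mul_pow, sq_abs, Real.norm_eq_abs]
    ring
  -- φ values
  have pk : φ xk = (1 / (2 * γ)) * ‖xk - v‖ ^ 2 + g xk := hφ xk
  have pb : φ xbar = (1 / (2 * γ)) * ‖w‖ ^ 2 + g xbar := by rw [hφ, hw]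
  have pp : φ xprev = (1 / (2 * γ)) * ‖xprev - v‖ ^ 2 + g xprev := hφ xprev
  have hde : ‖d‖ ^ 2 ≤ α ^ 2 * ε ^ 2 := by
    nlinarith [norm_nonneg d, hclose, mul_nonneg hα.le hε]
  -- key bound on φ xk
  have key1 : φ xk ≤ φ xprev + (1 / (2 * γ) + L / 2) * ‖d‖ ^ 2 := by
    have h1 : φ xk = φ xbar + ((1 / (2 * γ)) * (2 * inner ℝ w d) + (inner ℝ (gradient g xbar) d : ℝ))
        + (1 / (2 * γ)) * ‖d‖ ^ 2
        + (g xk - g xbar - inner ℝ (gradient g xbar) d) := by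
      rw [pk, pb, e1]; ring
    rw [hfoc] at h1
    have h2 := hmin xprev
    linarith
  have hc : (0:ℝ) ≤ 1 / (2 * γ) + L / 2 := by positivity
  have key2 : φ xk ≤ φ xprev + (1 / (2 * γ) + L / 2) * (α ^ 2 * ε ^ 2) := by
    have := mul_le_mul_of_nonneg_left hde hc
    linarith
  -- algebraic identities
  have h3 : (1 / (2 * γ)) * (γ ^ 2 * ‖gradient h xprev‖ ^ 2)
      - (1 / (2 * γ)) * (‖xk - xprev‖ ^ 2
        + 2 * γ * inner ℝ (gradient h xprev) (xk - xprev)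
        + γ ^ 2 * ‖gradient h xprev‖ ^ 2)
      = -(1 / (2 * γ)) * ‖xk - xprev‖ ^ 2 - inner ℝ (gradient h xprev) (xk - xprev) := by
    field_simp
    ring
  have hgk : g xk ≤ g xprev - (1 / (2 * γ)) * ‖xk - xprev‖ ^ 2
      - inner ℝ (gradient h xprev) (xk - xprev) + (1 / (2 * γ) + L / 2) * (α ^ 2 * ε ^ 2) := by
    have h1 : g xk = φ xk - (1 / (2 * γ)) * (‖xk - xprev‖ ^ 2
        + 2 * γ * inner ℝ (gradient h xprev) (xk - xprev)
        + γ ^ 2 * ‖gradient h xprev‖ ^ 2) := by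
      rw [pk, e3]; ring
    have h2 : φ xprev = (1 / (2 * γ)) * (γ ^ 2 * ‖gradient h xprev‖ ^ 2) + g xprev := by
      rw [pp, e2]
    linarith
  have ht1 : (1 - γ * M) / (2 * γ) = 1 / (2 * γ) - M / 2 := by
    field_simp
  have ht2 : ((1 / γ + L) * α ^ 2 * ε ^ 2) / 2 = (1 / (2 * γ) + L / 2) * (α ^ 2 * ε ^ 2) := by
    field_simp
  rw [hf xk, hf xprev, ht1, ht2]
  linarith
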